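/- Let p be a prime. Suppose G is a torsion-free abelian group that does not contain an isomorphic copy of ℚ, and let g ∈ G with g ≠ 0. The following are equivalent: (1) there is an injective additive group homomorphism h : ℤ_[p] →+ G with h(1) = g; (2) the following three conditions hold: (G) for every t ∈ ℤ_[p], there exists a unique y ∈ G with ψ_{p,t}(y, g); (H) for all t¹, t² ∈ ℤ_[p] there exist y₁, y₂, y₃ ∈ G with ψ_{p,t¹}(y₁, g), ψ_{p,t²}(y₂, g), ψ_{p,t¹-t²}(y₃, g), and y₃ = y₁ - y₂; (K) for every t ∈ ℤ_[p] with t ≠ 0, there exists y ∈ G with y ≠ 0 and ψ_{p,t}(y, g). -/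

import Mathlib

/-- A group `G` is torsion-free: `n • x ≠ 0` for every `x ≠ 0` and integer `n > 0`. -/
def IsTorsionFreeGroup (G : Type*) [AddCommGroup G] : Prop :=
  ∀ x : G, x ≠ 0 → ∀ n : ℤ, 0 < n → n • x ≠ 0

/-- `G` contains a subgroup isomorphic to `A`. -/
def ContainsCopy (A G : Type*) [AddCommGroup A] [AddCommGroup G] : Prop :=
  ∃ f : A →+ G, Function.Injective f

/-- The formula `ψ_{p,t}(y, x)`: for every `n`, `p^n` divides `y - (t.appr n) • x` in `G`,
and every integer `q` coprime to `p` divides both `y` and `x` in `G`. -/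
def PsiFormula {G : Type*} [AddCommGroup G] (p : ℕ) [Fact p.Prime]
    (t : ℤ_[p]) (y x : G) : Prop :=
  (∀ n : ℕ, ∃ z : G, ((p : ℤ) ^ n) • z = y - (t.appr n : ℤ) • x) ∧
  (∀ q : ℤ, Int.gcd q (p : ℤ) = 1 →
    (∃ z : G, q • z = y) ∧ (∃ z : G, q • z = x))

section Aux
variable {G : Type*} [AddCommGroup G] (hG : IsTorsionFreeGroup G)

lemma tf_smul_eq_zero (hG : IsTorsionFreeGroup G) {n : ℤ} (hn : n ≠ 0) {x : G}
    (h : n • x = 0) : x = 0 := by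
  by_contra hx
  rcases hn.lt_or_gt with h1 | h1
  · exact hG x hx (-n) (by omega) (by simpa using h)
  · exact hG x hx n h1 h

lemma tf_smul_cancel (hG : IsTorsionFreeGroup G) {n : ℤ} (hn : n ≠ 0) {x y : G}
    (h : n • x = n • y) : x = y := by
  have := tf_smul_eq_zero hG hn (x := x - y) (by rw [smul_sub, h, sub_self])
  exact sub_eq_zero.mp this

/-- A nonzero element divisible by every positive integer yields a copy of ℚ. -/
lemma contains_copy_rat (hG : IsTorsionFreeGroup G) (d : G) (hd : d ≠ 0)
    (hdiv : ∀ n : ℤ, 0 < n → ∃ z : G, n • z = d) : ContainsCopy ℚ G := by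
  -- f a := the unique y with (a.den : ℤ) • y = a.num • d
  have hex : ∀ a : ℚ, ∃ y : G, (a.den : ℤ) • y = a.num • d := by
    intro a
    obtain ⟨z, hz⟩ := hdiv a.den (by exact_mod_cast a.pos)
    exact ⟨a.num • z, by rw [smul_comm, hz]⟩
  set f : ℚ → G := fun a => Classical.choose (hex a) with hf
  have hchar : ∀ a : ℚ, (a.den : ℤ) • f a = a.num • d := fun a => Classical.choose_spec (hex a)
  have huniq : ∀ (a : ℚ) (y : G), (a.den : ℤ) • y = a.num • d → y = f a := by
    intro a y hy
    exact tf_smul_cancel hG (by exact_mod_cast a.den_nz) (hy.trans (hchar a).symm)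
  have key : ∀ a b : ℚ, (a + b).num * (a.den * b.den) =
      ((a + b).den : ℤ) * (a.num * b.den + b.num * a.den) := by
    intro a b
    have h1 : ((a + b).num : ℚ) * (a.den * b.den) =
        ((a + b).den : ℚ) * (a.num * b.den + b.num * a.den) := by
      have e1 : ((a+b).num : ℚ) = (a+b) * (a+b).den :=
        ((div_eq_iff (by exact_mod_cast (a+b).den_nz)).mp (Rat.num_div_den (a+b)))
      have e2 : (a.num : ℚ) = a * a.den :=
        ((div_eq_iff (by exact_mod_cast a.den_nz)).mp (Rat.num_div_den a))
      have e3 : (b.num : ℚ) = b * b.den :=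
        ((div_eq_iff (by exact_mod_cast b.den_nz)).mp (Rat.num_div_den b))
      rw [e1, e2, e3]; ring
    exact_mod_cast h1
  have hadd : ∀ a b : ℚ, f (a + b) = f a + f b := by
    intro a b
    have hN : (((a+b).den : ℤ) * (a.den * b.den)) ≠ 0 := by positivity
    apply tf_smul_cancel hG hN
    have ha' : ((a.den : ℤ) * b.den) • f a = ((b.den : ℤ) * a.num) • d := by
      rw [mul_comm, mul_smul, hchar, ← mul_smul]
    have hb' : ((a.den : ℤ) * b.den) • f b = ((a.den : ℤ) * b.num) • d := by
      rw [mul_smul, hchar, ← mul_smul]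
    have L : ((((a+b).den : ℤ)) * ((a.den : ℤ) * b.den)) • f (a+b)
        = (((a.den : ℤ) * b.den) * (a+b).num) • d := by
      rw [mul_comm ((((a+b).den : ℤ))) ((a.den : ℤ) * b.den), mul_smul, hchar, ← mul_smul]
    have R : ((((a+b).den : ℤ)) * ((a.den : ℤ) * b.den)) • (f a + f b)
        = ((((a+b).den : ℤ)) * ((b.den : ℤ) * a.num) + (((a+b).den : ℤ)) * ((a.den : ℤ) * b.num)) • d := by
      rw [smul_add, mul_smul (((a+b).den : ℤ)) ((a.den : ℤ) * b.den) (f a),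
        mul_smul (((a+b).den : ℤ)) ((a.den : ℤ) * b.den) (f b), ha', hb',
        ← mul_smul, ← mul_smul, ← add_smul]
    rw [L, R]
    congr 1
    linear_combination key a b
  refine ⟨AddMonoidHom.mk' f hadd, ?_⟩
  rw [injective_iff_map_eq_zero (AddMonoidHom.mk' f hadd)]
  intro a ha
  simp only [AddMonoidHom.mk'_apply] at ha
  have : a.num • d = 0 := by rw [← hchar a, ha, smul_zero]
  have hnum : a.num = 0 := by
    by_contra h
    exact hd (tf_smul_eq_zero hG h this)
  exact Rat.num_eq_zero.mp hnum

/-- Combine coprime divisibilities via Bezout. -/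
lemma dvd_combine {a b : ℤ} (hab : Int.gcd a b = 1) {x z w : G}
    (hz : a • z = x) (hw : b • w = x) : ∃ u : G, (a * b) • u = x := by
  obtain ⟨s, r, hsr⟩ : ∃ s r : ℤ, s * a + r * b = 1 := by
    refine ⟨Int.gcdA a b, Int.gcdB a b, ?_⟩
    have := Int.gcd_eq_gcd_ab a b
    rw [hab] at this
    push_cast at this
    linarith [this]
  refine ⟨r • z + s • w, ?_⟩
  have h1 : (a * b) • (r • z) = (r * b) • x := by
    rw [← hz, ← mul_smul, ← mul_smul]; ring_nf
  have h2 : (a * b) • (s • w) = (s * a) • x := by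
    rw [← hw, ← mul_smul, ← mul_smul]; ring_nf
  rw [smul_add, h1, h2, ← add_smul]
  rw [show r * b + s * a = 1 by linarith [hsr], one_smul]

end Aux

section Psi
variable {G : Type*} [AddCommGroup G] (p : ℕ) [Fact p.Prime]

/-- Two elements satisfying ψ for the same t differ by an infinitely divisible element. -/
lemma psi_unique {G : Type*} [AddCommGroup G] {p : ℕ} [Fact p.Prime]
    (hG : IsTorsionFreeGroup G) (hQ : ¬ ContainsCopy ℚ G)
    {t : ℤ_[p]} {g y y' : G} (h : PsiFormula p t y g) (h' : PsiFormula p t y' g) :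
    y = y' := by
  have hp : p.Prime := Fact.out
  by_contra hne
  apply hQ
  apply contains_copy_rat hG (y - y') (sub_ne_zero.mpr hne)
  intro m hm
  set N := m.toNat with hNdef
  have hN : N ≠ 0 := by omega
  set k := N.factorization p with hk
  set q := N / p ^ k with hq
  have hfact : p ^ k * q = N := Nat.ordProj_mul_ordCompl_eq_self N p
  have hcop : Nat.Coprime p q := Nat.coprime_ordCompl hp hN
  -- p^k divides y - y'
  obtain ⟨z, hz⟩ := h.1 k
  obtain ⟨z', hz'⟩ := h'.1 k
  have hzz : ((p : ℤ) ^ k) • (z - z') = y - y' := by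
    rw [smul_sub, hz, hz']; abel
  -- q divides y - y'
  have hqcop : Int.gcd (q : ℤ) (p : ℤ) = 1 := by
    rw [Int.gcd_natCast_natCast]
    exact (Nat.coprime_comm.mp hcop)
  obtain ⟨⟨w, hw⟩, -⟩ := h.2 (q : ℤ) hqcop
  obtain ⟨⟨w', hw'⟩, -⟩ := h'.2 (q : ℤ) hqcop
  have hww : (q : ℤ) • (w - w') = y - y' := by
    rw [smul_sub, hw, hw']
  have hgcd : Int.gcd ((p : ℤ) ^ k) (q : ℤ) = 1 := by
    have : Nat.Coprime (p ^ k) q := Nat.Coprime.pow_left k hcop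
    rw [show ((p : ℤ) ^ k) = ((p ^ k : ℕ) : ℤ) by push_cast; ring, Int.gcd_natCast_natCast]
    exact this
  obtain ⟨u, hu⟩ := dvd_combine hgcd hzz hww
  refine ⟨u, ?_⟩
  rw [show m = (p : ℤ) ^ k * (q : ℤ) by
    rw [show m = (N : ℤ) by omega, ← hfact]; push_cast; ring]
  exact hu

end Psi

lemma psi_of_hom {G : Type*} [AddCommGroup G] {p : ℕ} [Fact p.Prime]
    (h : ℤ_[p] →+ G) {g : G} (h1 : h 1 = g) (t : ℤ_[p]) : PsiFormula p t (h t) g := by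
  have hp : p.Prime := Fact.out
  constructor
  · intro n
    have hs := PadicInt.appr_spec n t
    rw [Ideal.mem_span_singleton] at hs
    obtain ⟨c, hc⟩ := hs
    refine ⟨h c, ?_⟩
    have key : ((p : ℤ) ^ n) • c = t - (t.appr n : ℤ) • (1 : ℤ_[p]) := by
      rw [zsmul_eq_mul, zsmul_eq_mul, mul_one]
      push_cast
      exact hc.symm
    calc ((p : ℤ) ^ n) • h c = h (((p : ℤ) ^ n) • c) := (map_zsmul h _ _).symm
      _ = h t - (t.appr n : ℤ) • g := by rw [key, map_sub, map_zsmul, h1]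
  · intro q hq
    have hnd : ¬ ((p : ℤ) ∣ q) := by
      intro hdvd
      have h2 : (p : ℤ) ∣ (Int.gcd q (p : ℤ) : ℤ) := Int.dvd_coe_gcd hdvd dvd_rfl
      rw [hq] at h2
      have := Int.le_of_dvd one_pos h2
      have := hp.two_le
      omega
    have hnorm : ‖((q : ℤ) : ℤ_[p])‖ = 1 :=
      le_antisymm (PadicInt.norm_le_one _)
        (not_lt.mp fun hlt => hnd ((PadicInt.norm_int_lt_one_iff_dvd q).mp hlt))
    obtain ⟨u, hu⟩ := PadicInt.isUnit_iff.mpr hnorm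
    constructor
    · refine ⟨h ((↑u⁻¹ : ℤ_[p]) * t), ?_⟩
      rw [← map_zsmul]
      congr 1
      rw [zsmul_eq_mul, ← hu, ← mul_assoc, u.mul_inv, one_mul]
    · refine ⟨h (↑u⁻¹ : ℤ_[p]), ?_⟩
      rw [← map_zsmul, ← h1]
      congr 1
      rw [zsmul_eq_mul, ← hu, u.mul_inv]


/-- In a torsion-free group with no copy of `ℚ`, `ℤ_[p]` embeds sending `1` to `g ≠ 0`
iff conditions (G), (H), (K) hold for `g`. -/
theorem padic_embeds_iff (p : ℕ) [Fact p.Prime] (G : Type*) [AddCommGroup G]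
    (hG : IsTorsionFreeGroup G) (hQ : ¬ ContainsCopy ℚ G)
    (g : G) (hg : g ≠ 0) :
    (∃ h : ℤ_[p] →+ G, Function.Injective h ∧ h 1 = g) ↔
    ((∀ t : ℤ_[p], ∃! y : G, PsiFormula p t y g) ∧
     (∀ t₁ t₂ : ℤ_[p], ∃ y₁ y₂ y₃ : G,
        PsiFormula p t₁ y₁ g ∧ PsiFormula p t₂ y₂ g ∧
        PsiFormula p (t₁ - t₂) y₃ g ∧ y₃ = y₁ - y₂) ∧
     (∀ t : ℤ_[p], t ≠ 0 → ∃ y : G, y ≠ 0 ∧ PsiFormula p t y g)) := by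
  constructor
  · rintro ⟨h, hinj, h1⟩
    refine ⟨fun t => ⟨h t, psi_of_hom h h1 t,
        fun y hy => psi_unique hG hQ hy (psi_of_hom h h1 t)⟩,
      fun t₁ t₂ => ⟨h t₁, h t₂, h (t₁ - t₂), psi_of_hom h h1 t₁, psi_of_hom h h1 t₂,
        psi_of_hom h h1 (t₁ - t₂), by rw [map_sub]⟩,
      fun t ht => ⟨h t, fun h0 => ht (hinj (by rw [h0, map_zero])), psi_of_hom h h1 t⟩⟩
  · rintro ⟨hGc, hHc, hKc⟩
    choose y hy huniq using hGc
    have hsub : ∀ t₁ t₂ : ℤ_[p], y (t₁ - t₂) = y t₁ - y t₂ := by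
      intro t₁ t₂
      obtain ⟨y₁, y₂, y₃, hy1, hy2, hy3, he⟩ := hHc t₁ t₂
      rw [huniq _ _ hy1, huniq _ _ hy2] at he
      rw [← huniq _ _ hy3, he]
    have hzero : y 0 = 0 := by
      have := hsub 0 0; simpa using this
    have hneg : ∀ t, y (-t) = - y t := by
      intro t; have := hsub 0 t; simpa [hzero] using this
    have hadd : ∀ a b : ℤ_[p], y (a + b) = y a + y b := by
      intro a b
      have := hsub a (-b)
      rw [hneg] at this
      simpa [sub_neg_eq_add] using this
    have hpsi1 : PsiFormula p 1 g g := by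
      constructor
      · intro n
        have hs := PadicInt.appr_spec n (1 : ℤ_[p])
        rw [Ideal.mem_span_singleton] at hs
        have hdvd : ((p : ℤ) ^ n) ∣ (1 - ((1 : ℤ_[p]).appr n : ℤ)) := by
          rw [← PadicInt.pow_p_dvd_int_iff]
          push_cast
          exact hs
        obtain ⟨c, hc⟩ := hdvd
        exact ⟨c • g, by rw [← mul_smul, ← hc, sub_smul, one_smul]⟩
      · intro q hq
        obtain ⟨-, hdg⟩ := (hy 1).2 q hq
        exact ⟨hdg, hdg⟩
    have hf1 : y 1 = g := (huniq 1 g hpsi1).symm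
    refine ⟨AddMonoidHom.mk' y hadd, ?_, hf1⟩
    rw [injective_iff_map_eq_zero]
    intro t ht
    simp only [AddMonoidHom.mk'_apply] at ht
    by_contra htne
    obtain ⟨y', hy'ne, hy'⟩ := hKc t htne
    exact hy'ne (by rw [huniq _ _ hy', ht])
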